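/- Let G be a connected bipartite finite simple graph on n ≥ 2 vertices with largest adjacency eigenvalue λ_1. Then EE(G) ≥ 2cosh(λ_1) + (n − 2). -/

import Mathlib

open Finset Real

namespace EstradaIndexPaper

/-- The adjacency matrix of a simple graph over `ℝ` is Hermitian. -/
theorem adjMatrix_isHermitian {n : ℕ} (G : SimpleGraph (Fin n)) [DecidableRel G.Adj] :
    (G.adjMatrix ℝ).IsHermitian := by
  unfold Matrix.IsHermitian
  rw [Matrix.conjTranspose_eq_transpose_of_trivial]
  exact G.isSymm_adjMatrix

/-- The eigenvalues of the adjacency matrix of `G`. -/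
noncomputable def eig {n : ℕ} (G : SimpleGraph (Fin n)) [DecidableRel G.Adj] : Fin n → ℝ :=
  (adjMatrix_isHermitian G).eigenvalues

/-- The Estrada index of `G`: the sum of `e^{λ_i}` over the adjacency eigenvalues. -/
noncomputable def EE {n : ℕ} (G : SimpleGraph (Fin n)) [DecidableRel G.Adj] : ℝ :=
  ∑ i, Real.exp (eig G i)

/-- The largest adjacency eigenvalue `λ₁` of `G`. -/
noncomputable def lam1 {n : ℕ} (G : SimpleGraph (Fin n)) [DecidableRel G.Adj] : ℝ :=
  ⨆ i, eig G i

/-- The Randić index `R(G) = Σ_{ij ∈ E(G)} (d(i)d(j))^{-1/2}`. -/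
noncomputable def randic {n : ℕ} (G : SimpleGraph (Fin n)) [DecidableRel G.Adj] : ℝ :=
  ∑ e ∈ G.edgeFinset,
    Sym2.lift ⟨fun i j => (Real.sqrt ((G.degree i : ℝ) * (G.degree j : ℝ)))⁻¹,
      fun i j => by simp [mul_comm]⟩ e

/-- The general Randić index `R_{1/2}(G) = Σ_{ij ∈ E(G)} (d(i)d(j))^{1/2}`. -/
noncomputable def randicHalf {n : ℕ} (G : SimpleGraph (Fin n)) [DecidableRel G.Adj] : ℝ :=
  ∑ e ∈ G.edgeFinset,
    Sym2.lift ⟨fun i j => Real.sqrt ((G.degree i : ℝ) * (G.degree j : ℝ)),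
      fun i j => by simp [mul_comm]⟩ e

/-- The sum of the adjacency eigenvalues is the trace, which is zero. -/
lemma sum_eig_eq_zero {n : ℕ} (G : SimpleGraph (Fin n)) [DecidableRel G.Adj] :
    ∑ i, eig G i = 0 := by
  have hA := adjMatrix_isHermitian G
  have h := congrArg Matrix.trace hA.spectral_theorem
  rw [Unitary.conjStarAlgAut_apply, Matrix.trace_mul_cycle,
    Unitary.star_mul_self_of_mem (Matrix.IsHermitian.eigenvectorUnitary hA).2, one_mul,
    Matrix.trace_diagonal] at h
  simpa [eig] using h.symm

/-- For a 2-colorable graph, the negation of any eigenvalue admits an eigenvector. -/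
lemma neg_eigvec {n : ℕ} (G : SimpleGraph (Fin n)) [DecidableRel G.Adj]
    (hbip : G.Colorable 2) {μ : ℝ} {v : Fin n → ℝ} (hv : v ≠ 0)
    (h : Matrix.mulVec (G.adjMatrix ℝ) v = μ • v) :
    ∃ w : Fin n → ℝ, w ≠ 0 ∧ Matrix.mulVec (G.adjMatrix ℝ) w = (-μ) • w := by
  classical
  obtain ⟨C⟩ := hbip
  set s : Fin n → ℝ := fun j => if C j = 0 then 1 else -1 with hs
  refine ⟨fun j => s j * v j, ?_, ?_⟩
  · obtain ⟨j, hj⟩ := Function.ne_iff.mp hv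
    intro hw
    have := congrFun hw j
    have hsj : s j ≠ 0 := by by_cases h0 : C j = 0 <;> simp [hs, h0]
    simp only [Pi.zero_apply, mul_eq_zero] at this
    tauto
  · funext j
    have key : ∀ k, G.adjMatrix ℝ j k * (s k * v k)
        = -s j * (G.adjMatrix ℝ j k * v k) := by
      intro k
      by_cases hadj : G.Adj j k
      · have hne : C j ≠ C k := C.valid hadj
        have hsk : s k = -s j := by
          have h2 : ∀ x : Fin 2, x = 0 ∨ x = 1 := by decide
          rcases h2 (C j) with h0 | h0 <;> rcases h2 (C k) with h1 | h1 <;>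
            simp [hs, h0, h1] <;> exact absurd (h0.trans h1.symm) hne
        rw [hsk]; ring
      · simp [SimpleGraph.adjMatrix_apply, hadj]
    have hAv := congrFun h j
    simp only [Matrix.mulVec, dotProduct] at hAv ⊢
    calc ∑ k, G.adjMatrix ℝ j k * (s k * v k)
        = ∑ k, -s j * (G.adjMatrix ℝ j k * v k) := by
          exact Finset.sum_congr rfl fun k _ => key k
      _ = -s j * ∑ k, G.adjMatrix ℝ j k * v k := by rw [Finset.mul_sum]
      _ = -s j * (μ * v j) := by rw [hAv]; simp
      _ = (-μ) • (fun j => s j * v j) j := by simp; ring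

/-- Any real number admitting an eigenvector of a Hermitian matrix is one of its
`IsHermitian.eigenvalues`. -/
lemma eig_of_eigvec {n : ℕ} {A : Matrix (Fin n) (Fin n) ℝ} (hA : A.IsHermitian) {μ : ℝ}
    {w : Fin n → ℝ} (hw : w ≠ 0) (h : Matrix.mulVec A w = μ • w) :
    ∃ j, hA.eigenvalues j = μ := by
  have hev : Module.End.HasEigenvalue (Matrix.toLin' A) μ :=
    Module.End.hasEigenvalue_of_hasEigenvector
      ⟨Module.End.mem_eigenspace_iff.2 (by rw [Matrix.toLin'_apply]; exact h), hw⟩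
  have hspec : μ ∈ spectrum ℝ A := by
    have := Module.End.hasEigenvalue_iff_mem_spectrum.mp hev
    rwa [show Matrix.toLin' A = Matrix.toLinAlgEquiv' A from rfl,
      AlgEquiv.spectrum_eq] at this
  rw [hA.spectrum_real_eq_range_eigenvalues] at hspec
  exact hspec

/-- Each `IsHermitian.eigenvalues` admits a genuine eigenvector. -/
lemma exists_eigvec {n : ℕ} {A : Matrix (Fin n) (Fin n) ℝ} (hA : A.IsHermitian) (i : Fin n) :
    ∃ v : Fin n → ℝ, v ≠ 0 ∧ Matrix.mulVec A v = hA.eigenvalues i • v := by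
  refine ⟨⇑(hA.eigenvectorBasis i), ?_, hA.mulVec_eigenvectorBasis i⟩
  have := hA.eigenvectorBasis.orthonormal.ne_zero i
  intro hc
  exact this (by ext j; exact congrFun hc j)

theorem stmt8 {n : ℕ} (hn : 2 ≤ n) (G : SimpleGraph (Fin n)) [DecidableRel G.Adj]
    (hG : G.Connected) (hbip : G.Colorable 2) :
    EE G ≥ 2 * Real.cosh (lam1 G) + ((n : ℝ) - 2) := by
  classical
  have hne : Nonempty (Fin n) := ⟨⟨0, by omega⟩⟩
  have htr : ∑ i, eig G i = 0 := sum_eig_eq_zero G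
  obtain ⟨i0, hi0⟩ := Finite.exists_max (eig G)
  have hbdd : BddAbove (Set.range (eig G)) := Set.Finite.bddAbove (Set.finite_range _)
  have hlam : lam1 G = eig G i0 := le_antisymm (ciSup_le hi0) (le_ciSup hbdd i0)
  have hle : ∀ j, eig G j ≤ lam1 G := fun j => hlam ▸ hi0 j
  have hlam0 : 0 ≤ lam1 G := by
    by_contra hneg
    push_neg at hneg
    have hsum : ∑ i, eig G i ≤ ∑ _i : Fin n, lam1 G := Finset.sum_le_sum fun i _ => hle i
    rw [htr, Finset.sum_const, Finset.card_univ, Fintype.card_fin] at hsum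
    rw [nsmul_eq_mul] at hsum
    have hn0 : (0:ℝ) < n := by exact_mod_cast Nat.lt_of_lt_of_le (by norm_num) hn
    nlinarith
  rcases eq_or_lt_of_le hlam0 with heq | hpos
  · have hall : ∀ i ∈ Finset.univ, eig G i = 0 :=
      (Finset.sum_eq_zero_iff_of_nonpos (fun i _ => (hle i).trans heq.symm.le)).mp htr
    have hEE : EE G = n := by
      unfold EE
      rw [Finset.sum_congr rfl fun i hi => by rw [hall i hi, Real.exp_zero]]
      simp
    rw [hEE, ← heq, Real.cosh_zero]
    linarith
  · obtain ⟨v, hv, hAv⟩ := exists_eigvec (adjMatrix_isHermitian G) i0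
    obtain ⟨w, hw, hAw⟩ := neg_eigvec G hbip hv hAv
    obtain ⟨j0, hj0⟩ := eig_of_eigvec (adjMatrix_isHermitian G) hw hAw
    have hj0' : eig G j0 = -(eig G i0) := hj0
    have hij : i0 ≠ j0 := by
      intro h
      rw [← h] at hj0'
      rw [hlam] at hpos
      linarith
    have hmem : i0 ∈ Finset.univ.erase j0 := Finset.mem_erase.2 ⟨hij, Finset.mem_univ _⟩
    set t : Finset (Fin n) := (Finset.univ.erase j0).erase i0 with ht
    have hsplit : ∀ f : Fin n → ℝ,
        ∑ i, f i = f j0 + (f i0 + ∑ i ∈ t, f i) := by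
      intro f
      rw [ht, Finset.add_sum_erase _ f hmem, Finset.add_sum_erase _ f (Finset.mem_univ j0)]
    have hcard : (t.card : ℝ) = (n : ℝ) - 2 := by
      have : t.card = n - 2 := by
        rw [ht, Finset.card_erase_of_mem hmem, Finset.card_erase_of_mem (Finset.mem_univ j0),
          Finset.card_univ, Fintype.card_fin]
        omega
      rw [this, Nat.cast_sub hn]
      norm_num
    have hsum_t : ∑ i ∈ t, eig G i = 0 := by
      have := hsplit (eig G)
      rw [htr, hj0'] at this
      linarith
    have hbound : ∑ i ∈ t, Real.exp (eig G i) ≥ (n : ℝ) - 2 := by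
      calc ∑ i ∈ t, Real.exp (eig G i) ≥ ∑ i ∈ t, (1 + eig G i) :=
            Finset.sum_le_sum fun i _ => by
              have := Real.add_one_le_exp (eig G i); linarith
        _ = t.card + ∑ i ∈ t, eig G i := by rw [Finset.sum_add_distrib]; simp
        _ = (n : ℝ) - 2 := by rw [hsum_t, hcard]; ring
    have hEE : EE G = Real.exp (eig G j0) + (Real.exp (eig G i0)
        + ∑ i ∈ t, Real.exp (eig G i)) := hsplit fun i => Real.exp (eig G i)
    rw [hEE, Real.cosh_eq, hlam, hj0']
    have h1 : Real.exp (-(eig G i0)) = Real.exp (-eig G i0) := by ring_nf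
    rw [h1] at *
    linarith [hbound]

end EstradaIndexPaper
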